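/- Let λ be a partition of n (labelling χ_λ ∈ Irr(S_n)) and q an odd integer. Suppose σ ∈ S_n is a q-cycle with support {n−q+1,…,n}, λ is self-conjugate, and the product σg (for g ∈ A_{n−q}) has cycle type equal to the partition of diagonal hook lengths of λ. If λ has a diagonal hook of length q and μ_λ is the unique self-conjugate partition in M_q(λ), then the difference of the two irreducible constituents of χ_λ restricted to A_n satisfies (ρ_λ^+ − ρ_λ^−)(σg) = ±√((−1)^{(q−1)/2} q) · (ρ_{μ_λ}^+ − ρ_{μ_λ}^−)(g), with the sign determined by the chosen labelling. -/

import Mathlib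

open scoped BigOperators

/-- `lam : ℕ → ℕ` represents a partition: weakly decreasing and eventually zero
(`lam i` is the `i`-th part, indexed from `0`). -/
def IsPartitionFun (lam : ℕ → ℕ) : Prop :=
  (∀ i j, i ≤ j → lam j ≤ lam i) ∧ ∃ N, ∀ i, N ≤ i → lam i = 0

/-- The conjugate (transpose) partition. -/
noncomputable def conjFun (lam : ℕ → ℕ) : ℕ → ℕ := fun j => {i | j < lam i}.ncard

/-- The hook length of the `(i,j)`-node of `lam` (nodes `(i,j)` with `j < lam i`,
both coordinates indexed from `0`). -/
noncomputable def hookLength (lam : ℕ → ℕ) (i j : ℕ) : ℕ :=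
  (lam i - j) + (conjFun lam j - i) - 1

/-- The leg length of the `(i,j)`-hook of `lam`. -/
noncomputable def legLength (lam : ℕ → ℕ) (i j : ℕ) : ℕ := conjFun lam j - i - 1

/-- The partition obtained from `lam` by removing the hook of the `(i,j)`-node. -/
noncomputable def removeHook (lam : ℕ → ℕ) (i j : ℕ) : ℕ → ℕ := fun k =>
  if k < i then lam k
  else if k + 1 < conjFun lam j then lam (k + 1) - 1
  else if k + 1 = conjFun lam j then j
  else lam k

/-- `M_q(lam)`: the set of partitions obtained from `lam` by removing a single `q`-hook. -/
noncomputable def MhookSet (q : ℕ) (lam : ℕ → ℕ) : Set (ℕ → ℕ) :=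
  {mu | ∃ i j, j < lam i ∧ hookLength lam i j = q ∧ mu = removeHook lam i j}

/-- The number of diagonal nodes (the Durfee square size) of `lam`. -/
noncomputable def durfee (lam : ℕ → ℕ) : ℕ := {i | i < lam i}.ncard

/-- The (finite set of distinct) diagonal hook lengths of `lam`. -/
noncomputable def diagHooks (lam : ℕ → ℕ) : Finset ℕ :=
  (Finset.range (durfee lam)).image (fun i => hookLength lam i i)

/-- The multiset of diagonal hook lengths of `lam`, with the parts of size `1` dropped,
i.e. the cycle type (in Mathlib's sense, where fixed points are omitted) of a permutation
of cycle type `a(lam)`. -/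
noncomputable def diagCycleType (lam : ℕ → ℕ) : Multiset ℕ :=
  (diagHooks lam).val.filter (fun a => 2 ≤ a)

/-- A branch of the complex square root, via the principal complex power. -/
noncomputable def sqrtC (z : ℂ) : ℂ := z ^ ((1 : ℂ) / 2)

/-- The quantity `y_lam = (1/2)·√((-1)^{(n-k)/2}·h_1⋯h_k)` attached to a self-conjugate
partition `lam` of `n` with diagonal hook lengths `h_1 > ⋯ > h_k`. -/
noncomputable def ySC (n : ℕ) (lam : ℕ → ℕ) : ℂ :=
  (1 / 2 : ℂ) *
    sqrtC ((-1 : ℂ) ^ ((n - (diagHooks lam).card) / 2) * ∏ h ∈ diagHooks lam, (h : ℂ))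

set_option linter.unusedSectionVars false
set_option maxHeartbeats 1000000


-- helpers
lemma ncard_eq_of_seg (S : Set ℕ) (m : ℕ)
    (h1 : ∀ k, k < m → k ∈ S) (h2 : ∀ k, m ≤ k → k ∉ S) : S.ncard = m := by
  have hS : S = ↑(Finset.range m) := by
    ext k
    simp only [Finset.coe_range, Set.mem_Iio]
    constructor
    · intro hk; by_contra hc; exact h2 k (le_of_not_gt hc) hk
    · exact h1 k
  rw [hS, Set.ncard_coe_finset, Finset.card_range]

lemma lower_mem_iff (S : Set ℕ) (hlow : ∀ a b : ℕ, a ≤ b → b ∈ S → a ∈ S)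
    (N : ℕ) (hN : ∀ k, N ≤ k → k ∉ S) (k : ℕ) : k ∈ S ↔ k < S.ncard := by
  classical
  have hex : ∃ m, m ∉ S := ⟨N, hN N le_rfl⟩
  have h1 : ∀ k, k < Nat.find hex → k ∈ S := by
    intro k hk
    have := Nat.find_min hex hk
    simpa using this
  have h2 : ∀ k, Nat.find hex ≤ k → k ∉ S := by
    intro k hk hkS
    exact Nat.find_spec hex (hlow _ k hk hkS)
  rw [ncard_eq_of_seg S (Nat.find hex) h1 h2]
  constructor
  · intro hk; by_contra hc; exact h2 k (le_of_not_gt hc) hk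
  · exact h1 k

section SelfConj

variable {lam : ℕ → ℕ} (hdec : ∀ i j : ℕ, i ≤ j → lam j ≤ lam i)
  (N0 : ℕ) (hvan : ∀ i, N0 ≤ i → lam i = 0) (hsc : conjFun lam = lam)

include hdec hvan

-- duality: c < lam m ↔ m < lam c
include hsc in
lemma dual : ∀ c m : ℕ, c < lam m ↔ m < lam c := by
  intro c m
  have h1 : conjFun lam c = lam c := congrFun hsc c
  have h2 : {i | c < lam i}.ncard = conjFun lam c := rfl
  have := lower_mem_iff {i | c < lam i}
    (fun a b hab hb => lt_of_lt_of_le hb (hdec a b hab)) N0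
    (fun k hk => by simp [hvan k hk])
  rw [h2, h1] at this
  exact (this m)

lemma durfee_mem_iff : ∀ k : ℕ, k < lam k ↔ k < durfee lam := by
  intro k
  exact lower_mem_iff {i | i < lam i}
    (fun a b hab hb => lt_of_le_of_lt hab (lt_of_lt_of_le hb (hdec a b hab))) N0
    (fun k hk => by simp [hvan k hk]) k

end SelfConj

section SelfConj2

variable {lam : ℕ → ℕ} (hdec : ∀ i j : ℕ, i ≤ j → lam j ≤ lam i)
  (N0 : ℕ) (hvan : ∀ i, N0 ≤ i → lam i = 0) (hsc : conjFun lam = lam)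

include hdec hvan hsc

lemma RH (i j k : ℕ) : removeHook lam i j k =
    if k < i then lam k
    else if k + 1 < lam j then lam (k + 1) - 1
    else if k + 1 = lam j then j
    else lam k := by
  rw [removeHook, congrFun hsc j]

lemma RH_anti (i j : ℕ) (hij : j < lam i) :
    ∀ k k' : ℕ, k ≤ k' → removeHook lam i j k' ≤ removeHook lam i j k := by
  have hd := dual hdec N0 hvan hsc
  have hiL : i < lam j := (hd j i).mp hij
  have hLj : lam (lam j) ≤ j := by
    by_contra hc
    exact absurd ((hd j (lam j)).mp (lt_of_not_ge hc)) (lt_irrefl _)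
  have hLj1 : j < lam (lam j - 1) := by
    have : lam j - 1 < lam j := by omega
    exact (hd j (lam j - 1)).mpr this
  have step : ∀ k, removeHook lam i j (k + 1) ≤ removeHook lam i j k := by
    intro k
    rw [RH hdec N0 hvan hsc, RH hdec N0 hvan hsc]
    rcases lt_trichotomy (k + 1) i with h1 | h1 | h1
    · have hk : k < i := by omega
      simp only [if_pos h1, if_pos hk]
      exact hdec k (k+1) (by omega)
    · -- k + 1 = i
      have hk : k < i := by omega
      have hni : ¬ (k + 1 < i) := by omega
      simp only [if_pos hk, if_neg hni]
      by_cases h2 : k + 2 < lam j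
      · rw [if_pos h2]
        have := hdec k (k+1+1) (by omega); omega
      · rw [if_neg h2]
        by_cases h3 : k + 2 = lam j
        · rw [if_pos h3]
          have := hdec k i (by omega); omega
        · rw [if_neg h3]
          exact hdec k (k+1) (by omega)
    · -- i < k + 1, i.e. i ≤ k
      have hk : ¬ (k < i) := by omega
      have hk1 : ¬ (k + 1 < i) := by omega
      simp only [if_neg hk, if_neg hk1]
      by_cases h2 : k + 1 < lam j
      · rw [if_pos h2]
        by_cases h3 : k + 2 < lam j
        · rw [if_pos h3]
          have := hdec (k+1) (k+1+1) (by omega); omega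
        · rw [if_neg h3]
          by_cases h4 : k + 2 = lam j
          · rw [if_pos h4]
            -- goal: j ≤ lam (k+1) - 1, k + 1 = lam j - 1
            have : k + 1 = lam j - 1 := by omega
            rw [this]; omega
          · rw [if_neg h4]; omega
      · rw [if_neg h2]
        by_cases h3 : k + 1 = lam j
        · rw [if_pos h3]
          have hn4 : ¬ (k + 2 < lam j) := by omega
          have hn5 : ¬ (k + 2 = lam j) := by omega
          rw [if_neg hn4, if_neg hn5, h3]
          exact hLj
        · rw [if_neg h3]
          have hn4 : ¬ (k + 2 < lam j) := by omega
          have hn5 : ¬ (k + 2 = lam j) := by omega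
          rw [if_neg hn4, if_neg hn5]
          exact hdec k (k+1) (by omega)
  intro k k' hkk
  exact antitone_nat_of_succ_le step hkk

end SelfConj2

section SelfConj3

variable {lam : ℕ → ℕ} (hdec : ∀ i j : ℕ, i ≤ j → lam j ≤ lam i)
  (N0 : ℕ) (hvan : ∀ i, N0 ≤ i → lam i = 0) (hsc : conjFun lam = lam)

include hdec hvan hsc

lemma lam_lam_le : ∀ c : ℕ, lam (lam c) ≤ c := by
  intro c
  by_contra hcon
  exact absurd ((dual hdec N0 hvan hsc c (lam c)).mp (lt_of_not_ge hcon)) (lt_irrefl _)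

lemma conj_removeHook (i j : ℕ) (hij : j < lam i) :
    conjFun (removeHook lam i j) = removeHook lam j i := by
  have hd := dual hdec N0 hvan hsc
  have hll := lam_lam_le hdec N0 hvan hsc
  have hiL : i < lam j := (hd j i).mp hij
  set mu := removeHook lam i j with hmu
  have hR : ∀ k, mu k = if k < i then lam k else if k + 1 < lam j then lam (k + 1) - 1
      else if k + 1 = lam j then j else lam k := RH hdec N0 hvan hsc i j
  have hanti : ∀ k k' : ℕ, k ≤ k' → mu k' ≤ mu k := RH_anti hdec N0 hvan hsc i j hij
  funext c
  have key : ∀ m, (∀ k, k < m → c < mu k) → mu m ≤ c → conjFun mu c = m := by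
    intro m h1 h2
    exact ncard_eq_of_seg _ m h1
      (fun k hk hc => by have := hanti m k hk; simp only [Set.mem_setOf_eq] at hc; omega)
  rw [RH hdec N0 hvan hsc j i c]
  by_cases hc1 : c < j
  · rw [if_pos hc1]
    apply key (lam c)
    · intro k hk
      have hck : c < lam k := (hd c k).mpr hk
      rw [hR k]
      by_cases h1 : k < i
      · rwa [if_pos h1]
      · rw [if_neg h1]
        by_cases h2 : k + 1 < lam j
        · rw [if_pos h2]
          have : j < lam (k+1) := (hd j (k+1)).mpr h2
          omega
        · rw [if_neg h2]
          by_cases h3 : k + 1 = lam j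
          · rw [if_pos h3]; omega
          · rw [if_neg h3]; exact hck
    · rw [hR (lam c)]
      by_cases h1 : lam c < i
      · rw [if_pos h1]; exact hll c
      · rw [if_neg h1]
        by_cases h2 : lam c + 1 < lam j
        · rw [if_pos h2]
          have h4 : lam (lam c + 1) ≤ lam (lam c) := hdec _ _ (by omega)
          have := hll c
          omega
        · rw [if_neg h2]
          by_cases h3 : lam c + 1 = lam j
          · exfalso
            have := hdec c j (by omega)
            omega
          · rw [if_neg h3]; exact hll c
  · rw [if_neg hc1]
    by_cases hc2 : c + 1 < lam i
    · rw [if_pos hc2]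
      have him : i < lam (c+1) := (hd (c+1) i).mp hc2
      apply key (lam (c+1) - 1)
      · intro k hk
        rw [hR k]
        by_cases hk1 : k < i
        · rw [if_pos hk1]
          have := hdec k i (by omega)
          omega
        · rw [if_neg hk1]
          have hlamc1 : lam (c+1) ≤ lam j := hdec j (c+1) (by omega)
          have hk2 : k + 1 < lam j := by omega
          rw [if_pos hk2]
          have : c + 1 < lam (k+1) := (hd (c+1) (k+1)).mpr (by omega)
          omega
      · rw [hR (lam (c+1) - 1)]
        have hnm : ¬ (lam (c+1) - 1 < i) := by omega
        rw [if_neg hnm]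
        by_cases h2' : lam (c+1) - 1 + 1 < lam j
        · rw [if_pos h2']
          have hstep : lam (c+1) - 1 + 1 = lam (c+1) := by omega
          rw [hstep]
          have := hll (c+1)
          omega
        · rw [if_neg h2']
          by_cases h3' : lam (c+1) - 1 + 1 = lam j
          · rw [if_pos h3']; omega
          · rw [if_neg h3']
            have hmge : lam j ≤ lam (c+1) - 1 := by omega
            have h5 := hdec (lam j) (lam (c+1) - 1) hmge
            have := hll j
            omega
    · rw [if_neg hc2]
      by_cases hc3 : c + 1 = lam i
      · rw [if_pos hc3]
        apply key i
        · intro k hk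
          rw [hR k, if_pos hk]
          have := hdec k i (by omega)
          omega
        · rw [hR i]
          have : ¬ (i < i) := lt_irrefl i
          rw [if_neg this]
          by_cases hNi : i + 1 < lam j
          · rw [if_pos hNi]
            have := hdec i (i+1) (by omega)
            omega
          · rw [if_neg hNi]
            by_cases hNi2 : i + 1 = lam j
            · rw [if_pos hNi2]; omega
            · exfalso; omega
      · rw [if_neg hc3]
        apply key (lam c)
        · intro k hk
          have hck : c < lam k := (hd c k).mpr hk
          have hki : k < i := by
            by_contra hcon
            have := hdec i k (by omega)
            omega
          rw [hR k, if_pos hki]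
          exact hck
        · rw [hR (lam c)]
          by_cases b1 : lam c < i
          · rw [if_pos b1]; exact hll c
          · rw [if_neg b1]
            by_cases b2 : lam c + 1 < lam j
            · rw [if_pos b2]
              have := hdec (lam c) (lam c + 1) (by omega)
              have := hll c
              omega
            · rw [if_neg b2]
              by_cases b3 : lam c + 1 = lam j
              · rw [if_pos b3]; omega
              · rw [if_neg b3]; exact hll c
  end SelfConj3

section SelfConj4

variable {lam : ℕ → ℕ} (hdec : ∀ i j : ℕ, i ≤ j → lam j ≤ lam i)
  (N0 : ℕ) (hvan : ∀ i, N0 ≤ i → lam i = 0) (hsc : conjFun lam = lam)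

include hdec hvan hsc

lemma remove_diag (i j : ℕ) (hij : j < lam i)
    (hmusc : conjFun (removeHook lam i j) = removeHook lam i j) : i = j := by
  have hd := dual hdec N0 hvan hsc
  have hiL : i < lam j := (hd j i).mp hij
  have heq : removeHook lam i j = removeHook lam j i := by
    rw [← hmusc, conj_removeHook hdec N0 hvan hsc i j hij]
  rcases lt_trichotomy i j with h | h | h
  · exfalso
    have he := congrFun heq i
    rw [RH hdec N0 hvan hsc i j i, RH hdec N0 hvan hsc j i i] at he
    rw [if_neg (lt_irrefl i), if_pos h] at he
    by_cases h2 : i + 1 < lam j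
    · rw [if_pos h2] at he
      have := hdec i (i+1) (by omega)
      omega
    · rw [if_neg h2] at he
      by_cases h3 : i + 1 = lam j
      · rw [if_pos h3] at he; omega
      · omega
  · exact h
  · exfalso
    have he := congrFun heq j
    rw [RH hdec N0 hvan hsc i j j, RH hdec N0 hvan hsc j i j] at he
    rw [if_pos h, if_neg (lt_irrefl j)] at he
    by_cases h2 : j + 1 < lam i
    · rw [if_pos h2] at he
      have := hdec j (j+1) (by omega)
      omega
    · rw [if_neg h2] at he
      by_cases h3 : j + 1 = lam i
      · rw [if_pos h3] at he; omega
      · omega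

variable (t : ℕ) (ht : t < lam t)

include ht

lemma ht_d : t < durfee lam := (durfee_mem_iff hdec N0 hvan t).mp ht

lemma d_le_lam_t : durfee lam ≤ lam t := by
  by_contra hcon
  have h1 : lam t < lam (lam t) :=
    (durfee_mem_iff hdec N0 hvan (lam t)).mpr (lt_of_not_ge hcon)
  have h2 := lam_lam_le hdec N0 hvan hsc t
  omega

variable (hmusc : conjFun (removeHook lam t t) = removeHook lam t t)

lemma durfee_mu : durfee (removeHook lam t t) = durfee lam - 1 := by
  have hmem := durfee_mem_iff hdec N0 hvan
  have htd := ht_d hdec N0 hvan hsc t ht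
  have hdl := d_le_lam_t hdec N0 hvan hsc t ht
  apply ncard_eq_of_seg
  · intro k hk
    simp only [Set.mem_setOf_eq]
    rw [RH hdec N0 hvan hsc t t k]
    by_cases hkt : k < t
    · rw [if_pos hkt]
      exact (hmem k).mpr (by omega)
    · rw [if_neg hkt]
      have h2 : k + 1 < lam t := by omega
      rw [if_pos h2]
      have h3 : k + 1 < lam (k+1) := (hmem (k+1)).mpr (by omega)
      omega
  · intro k hk
    simp only [Set.mem_setOf_eq]
    rw [RH hdec N0 hvan hsc t t k]
    have hkt : ¬ (k < t) := by omega
    rw [if_neg hkt]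
    by_cases h2 : k + 1 < lam t
    · rw [if_pos h2]
      have h3 : ¬ (k + 1 < lam (k+1)) := fun hc => by have := (hmem (k+1)).mp hc; omega
      omega
    · rw [if_neg h2]
      by_cases h3 : k + 1 = lam t
      · rw [if_pos h3]; omega
      · rw [if_neg h3]
        have h4 : ¬ (k < lam k) := fun hc => by have := (hmem k).mp hc; omega
        omega

include hmusc

lemma hook_mu_lt (k : ℕ) (hkt : k < t) :
    hookLength (removeHook lam t t) k k = hookLength lam k k := by
  rw [hookLength, hookLength, congrFun hmusc k, congrFun hsc k,
    RH hdec N0 hvan hsc t t k, if_pos hkt]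

lemma hook_mu_ge (k : ℕ) (hkt : t ≤ k) (hk : k < durfee lam - 1) :
    hookLength (removeHook lam t t) k k = hookLength lam (k+1) (k+1) := by
  have hmem := durfee_mem_iff hdec N0 hvan
  have htd := ht_d hdec N0 hvan hsc t ht
  have hdl := d_le_lam_t hdec N0 hvan hsc t ht
  have h2 : k + 1 < lam t := by omega
  have h3 : k + 1 < lam (k+1) := (hmem (k+1)).mpr (by omega)
  rw [hookLength, hookLength, congrFun hmusc k, congrFun hsc (k+1),
    RH hdec N0 hvan hsc t t k, if_neg (by omega : ¬ (k < t)), if_pos h2]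
  omega

lemma diagHooks_mu : diagHooks (removeHook lam t t) =
    ((Finset.range (durfee lam)).erase t).image (fun s => hookLength lam s s) := by
  have htd := ht_d hdec N0 hvan hsc t ht
  rw [diagHooks, durfee_mu hdec N0 hvan hsc t ht]
  ext a
  simp only [Finset.mem_image, Finset.mem_range, Finset.mem_erase]
  constructor
  · rintro ⟨k, hk, rfl⟩
    by_cases hkt : k < t
    · exact ⟨k, ⟨by omega, by omega⟩, (hook_mu_lt hdec N0 hvan hsc t ht hmusc k hkt).symm⟩
    · exact ⟨k + 1, ⟨by omega, by omega⟩,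
        (hook_mu_ge hdec N0 hvan hsc t ht hmusc k (by omega) hk).symm⟩
  · rintro ⟨s, ⟨hst, hsd⟩, rfl⟩
    rcases lt_or_gt_of_ne hst with h | h
    · exact ⟨s, by omega, hook_mu_lt hdec N0 hvan hsc t ht hmusc s h⟩
    · refine ⟨s - 1, by omega, ?_⟩
      have hs1 : s - 1 + 1 = s := by omega
      rw [hook_mu_ge hdec N0 hvan hsc t ht hmusc (s-1) (by omega) (by omega), hs1]

omit ht hmusc in
lemma hook_strict_anti (s s' : ℕ) (hss : s < s') (hs' : s' < durfee lam) :
    hookLength lam s' s' < hookLength lam s s := by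
  have hmem := durfee_mem_iff hdec N0 hvan
  have h1 : s < lam s := (hmem s).mpr (by omega)
  have h2 : s' < lam s' := (hmem s').mpr hs'
  have h3 : lam s' ≤ lam s := hdec s s' (by omega)
  rw [hookLength, hookLength, congrFun hsc s, congrFun hsc s']
  omega

end SelfConj4

section Sum

variable {lam : ℕ → ℕ} (hdec : ∀ i j : ℕ, i ≤ j → lam j ≤ lam i)
  (N0 : ℕ) (hvan : ∀ i, N0 ≤ i → lam i = 0) (hsc : conjFun lam = lam)

include hdec hvan hsc

lemma lam_ge_d (j : ℕ) (hj : j < durfee lam) : durfee lam ≤ lam j := by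
  have hmem := durfee_mem_iff hdec N0 hvan
  have h1 : durfee lam - 1 < lam (durfee lam - 1) := (hmem _).mpr (by omega)
  have h2 := hdec j (durfee lam - 1) (by omega)
  omega

lemma sum_diag_hooks (n : ℕ)
    (hn : ∑ i ∈ Finset.range (max N0 (lam 0)), lam i = n) :
    n = ∑ s ∈ Finset.range (durfee lam), hookLength lam s s := by
  classical
  have hmem := durfee_mem_iff hdec N0 hvan
  have hd := dual hdec N0 hvan hsc
  set d := durfee lam with hdd
  set N := max N0 (lam 0) with hN
  clear_value d N
  have hlamd : ¬ (d < lam d) := fun hc => absurd ((hmem d).mp hc) (lt_irrefl d)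
  have hdN : d ≤ N := by
    by_contra hcon
    have h1 : N < lam N := (hmem N).mpr (by omega)
    have h2 : lam N = 0 := hvan N (by omega)
    omega
  have hlgd : ∀ j, j < d → d ≤ lam j := by
    intro j hj
    rw [hdd] at hj ⊢
    exact lam_ge_d hdec N0 hvan hsc j hj
  have hsplit : ∑ i ∈ Finset.range d, lam i + ∑ i ∈ Finset.Ico d N, lam i = n := by
    rw [← hn, Finset.range_eq_Ico]
    rw [Finset.range_eq_Ico]; exact Finset.sum_Ico_consecutive lam (Nat.zero_le d) hdN
  have claim2 : ∑ i ∈ Finset.Ico d N, lam i = ∑ j ∈ Finset.range d, (lam j - d) := by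
    have h1 : ∀ i ∈ Finset.Ico d N, lam i = ∑ j ∈ Finset.range d, if j < lam i then 1 else 0 := by
      intro i hi
      simp only [Finset.mem_Ico] at hi
      have hle : lam i ≤ d := le_trans (hdec d i hi.1) (by omega)
      rw [← Finset.card_filter]
      have he : (Finset.range d).filter (fun j => j < lam i) = Finset.range (lam i) := by
        ext x
        simp only [Finset.mem_filter, Finset.mem_range]
        omega
      rw [he, Finset.card_range]
    rw [Finset.sum_congr rfl h1, Finset.sum_comm]
    apply Finset.sum_congr rfl
    intro j hj
    simp only [Finset.mem_range] at hj
    rw [← Finset.card_filter]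
    have he : (Finset.Ico d N).filter (fun i => j < lam i) = Finset.Ico d (lam j) := by
      ext i
      simp only [Finset.mem_filter, Finset.mem_Ico]
      constructor
      · rintro ⟨⟨h1, h2⟩, h3⟩
        exact ⟨h1, (hd j i).mp h3⟩
      · rintro ⟨h1, h2⟩
        have h3 : j < lam i := (hd j i).mpr h2
        have h5 := hdec 0 j (Nat.zero_le j)
        have h4 : lam j ≤ N := by omega
        exact ⟨⟨h1, by omega⟩, h3⟩
    rw [he, Nat.card_Ico]
  have e1 : ∀ j ∈ Finset.range d, lam j + (lam j - d) + d = hookLength lam j j + (2*j+1) := by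
    intro j hj
    simp only [Finset.mem_range] at hj
    have h1 := hlgd j hj
    have h2 : j < lam j := (hmem j).mpr hj
    rw [hookLength, congrFun hsc j]
    omega
  have S1 := Finset.sum_congr rfl e1
  have gauss : (∑ j ∈ Finset.range d, j) * 2 = d * (d-1) := Finset.sum_range_id_mul_two d
  simp only [Finset.sum_add_distrib, Finset.sum_const, Finset.card_range, smul_eq_mul,
    mul_one] at S1
  have e2 : ∑ x ∈ Finset.range d, 2 * x = 2 * ∑ j ∈ Finset.range d, j := by
    rw [Finset.mul_sum]
  have hd1 : d * (d - 1) + d = d * d := by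
    cases d with
    | zero => rfl
    | succ m => simp [Nat.succ_sub_one]; ring
  omega

end Sum

section Perm

variable {n q : ℕ} {σ : Equiv.Perm (Fin n)}
  (hσc : σ.IsCycle) (hσsupp : ∀ x : Fin n, σ x ≠ x ↔ n - q ≤ (x : ℕ))
  (hqn : q ≤ n) (hq1 : 1 ≤ q)

include hσsupp hqn hq1 in
lemma supp_card : σ.support.card = q := by
  have hn1 : n - q < n := by omega
  have hs : σ.support = Finset.Ici (⟨n - q, hn1⟩ : Fin n) := by
    ext x
    rw [Equiv.Perm.mem_support, Finset.mem_Ici, hσsupp x, Fin.le_def]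
  rw [hs, Fin.card_Ici]
  simp
  omega

include hσsupp in
lemma disj_of_fix (g : Equiv.Perm (Fin n))
    (hg : ∀ a : Fin n, n - q ≤ (a : ℕ) → g a = a) : σ.Disjoint g := by
  intro x
  by_cases hx : n - q ≤ (x : ℕ)
  · exact Or.inr (hg x hx)
  · exact Or.inl (not_not.mp (fun hc => hx ((hσsupp x).mp hc)))

include hσc hσsupp in
lemma sigma_mem_factors (g : Equiv.Perm (Fin n))
    (hg : ∀ a : Fin n, n - q ≤ (a : ℕ) → g a = a) :
    σ ∈ (σ * g).cycleFactorsFinset := by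
  rw [Equiv.Perm.mem_cycleFactorsFinset_iff]
  refine ⟨hσc, fun x hx => ?_⟩
  have hxK : n - q ≤ (x : ℕ) := (hσsupp x).mp (Equiv.Perm.mem_support.mp hx)
  rw [Equiv.Perm.mul_apply, hg x hxK]

include hσsupp in
lemma conj_lift (g₀ g h' : Equiv.Perm (Fin n))
    (hfix : ∀ a : Fin n, n - q ≤ (a : ℕ) → h' a = a)
    (hc : h' * g₀ * h'⁻¹ = g) : h' * (σ * g₀) * h'⁻¹ = σ * g := by
  have hdisj : h'.Disjoint σ := by
    intro x
    by_cases hx : n - q ≤ (x : ℕ)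
    · exact Or.inl (hfix x hx)
    · exact Or.inr (not_not.mp (fun hcx => hx ((hσsupp x).mp hcx)))
  have hcs : h' * σ * h'⁻¹ = σ := by
    rw [hdisj.commute.eq]
    group
  calc h' * (σ * g₀) * h'⁻¹ = (h' * σ * h'⁻¹) * (h' * g₀ * h'⁻¹) := by group
    _ = σ * g := by rw [hcs, hc]

include hσc hσsupp hqn hq1 in
lemma conj_transfer (g₀ g h : Equiv.Perm (Fin n))
    (hσsign : Equiv.Perm.sign σ = 1)
    (hg₀ : ∀ a : Fin n, n - q ≤ (a : ℕ) → g₀ a = a)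
    (hg : ∀ a : Fin n, n - q ≤ (a : ℕ) → g a = a)
    (hh : h * (σ * g₀) * h⁻¹ = σ * g)
    (hsign : Equiv.Perm.sign h = 1)
    (hcount : Multiset.count q ((σ * g).cycleType) = 1) :
    ∃ h1 : Equiv.Perm (Fin n), Equiv.Perm.sign h1 = 1 ∧
      (∀ a : Fin n, n - q ≤ (a : ℕ) → h1 a = a) ∧ h1 * g₀ * h1⁻¹ = g := by
  classical
  have hmem1 : σ ∈ (σ * g).cycleFactorsFinset := sigma_mem_factors hσc hσsupp g hg
  have hconj_cyc : (h * σ * h⁻¹).IsCycle := hσc.conj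
  have hsupp_conj : (h * σ * h⁻¹).support = σ.support.map h.toEmbedding :=
    Equiv.Perm.support_conj
  have hmem2 : (h * σ * h⁻¹) ∈ (σ * g).cycleFactorsFinset := by
    rw [Equiv.Perm.mem_cycleFactorsFinset_iff]
    refine ⟨hconj_cyc, fun x hx => ?_⟩
    rw [hsupp_conj, Finset.mem_map] at hx
    obtain ⟨y, hy, rfl⟩ := hx
    have hyK : n - q ≤ (y : ℕ) := (hσsupp y).mp (Equiv.Perm.mem_support.mp hy)
    have h2 : (σ * g) (h.toEmbedding y) = h (σ y) := by
      rw [← hh]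
      simp [Equiv.Perm.mul_apply, hg₀ y hyK]
    rw [h2]
    simp [Equiv.Perm.mul_apply]
  have hcard1 : σ.support.card = q := supp_card hσsupp hqn hq1
  have hcard2 : (h * σ * h⁻¹).support.card = q := by
    rw [hsupp_conj, Finset.card_map, hcard1]
  have hσeq : h * σ * h⁻¹ = σ := by
    by_contra hne
    have hsub : ({h * σ * h⁻¹, σ} : Finset (Equiv.Perm (Fin n))) ⊆
        (σ * g).cycleFactorsFinset.filter (fun c => q = c.support.card) := by
      intro c hc
      rw [Finset.mem_insert, Finset.mem_singleton] at hc
      rcases hc with rfl | rfl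
      · exact Finset.mem_filter.mpr ⟨hmem2, hcard2.symm⟩
      · exact Finset.mem_filter.mpr ⟨hmem1, hcard1.symm⟩
    have hcnt : Multiset.count q ((σ * g).cycleType) =
        ((σ * g).cycleFactorsFinset.filter (fun c => q = c.support.card)).card := by
      rw [Equiv.Perm.cycleType, Multiset.count_map, ← Finset.filter_val, Finset.card_def]
      rfl
    have h2le : 2 ≤ ((σ * g).cycleFactorsFinset.filter
        (fun c => q = c.support.card)).card := by
      have := Finset.card_le_card hsub
      rwa [Finset.card_pair hne] at this
    omega
  have hcomm : h * σ = σ * h := by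
    have h2 := congrArg (fun z => z * h) hσeq
    simpa [mul_assoc] using h2
  have hcommC : Commute h σ := hcomm
  have hn1 : n - 1 < n := by omega
  set x₀ : Fin n := ⟨n - 1, hn1⟩ with hx₀def
  have hx₀K : n - q ≤ (x₀ : ℕ) := by simp [hx₀def]; omega
  have hx₀ : σ x₀ ≠ x₀ := (hσsupp x₀).mpr hx₀K
  obtain ⟨a, ha, hall⟩ := hσc
  have happly : ∀ (z : ℤ) (x : Fin n), h ((σ ^ z) x) = (σ ^ z) (h x) := by
    intro z x
    have hc : h * σ ^ z = σ ^ z * h := (hcommC.zpow_right z).eq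
    rw [← Equiv.Perm.mul_apply, hc, Equiv.Perm.mul_apply]
  have hx₀' : σ (h x₀) ≠ h x₀ := by
    have h1 : σ (h x₀) = h (σ x₀) := by
      rw [← Equiv.Perm.mul_apply, ← hcomm, Equiv.Perm.mul_apply]
    rw [h1]
    exact fun hc => hx₀ (h.injective hc)
  obtain ⟨m, hm⟩ := ((hall hx₀).symm.trans (hall hx₀') :
    σ.SameCycle x₀ (h x₀))
  have hKmap : ∀ x : Fin n, σ x ≠ x → h x = (σ ^ m) x := by
    intro x hx
    obtain ⟨jj, hjj⟩ := ((hall hx₀).symm.trans (hall hx) : σ.SameCycle x₀ x)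
    calc h x = h ((σ ^ jj) x₀) := by rw [hjj]
      _ = (σ ^ jj) (h x₀) := happly jj x₀
      _ = (σ ^ jj) ((σ ^ m) x₀) := by rw [hm]
      _ = (σ ^ m) ((σ ^ jj) x₀) := by
          rw [← Equiv.Perm.mul_apply, ← zpow_add, add_comm, zpow_add, Equiv.Perm.mul_apply]
      _ = (σ ^ m) x := by rw [hjj]
  have hcancel : ∀ x : Fin n, (σ ^ m) ((σ ^ (-m)) x) = x := by
    intro x
    rw [← Equiv.Perm.mul_apply, ← zpow_add, add_neg_cancel, zpow_zero, Equiv.Perm.one_apply]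
  have hKpres : ∀ x : Fin n, σ x ≠ x → σ ((σ ^ (-m)) x) ≠ (σ ^ (-m)) x := by
    intro x hx hc
    have hfix : ∀ z : ℤ, (σ ^ z) ((σ ^ (-m)) x) = (σ ^ (-m)) x := by
      intro z
      exact Equiv.Perm.zpow_apply_eq_self_of_apply_eq_self hc z
    have h1 : x = (σ ^ (-m)) x := by
      calc x = (σ ^ m) ((σ ^ (-m)) x) := (hcancel x).symm
        _ = (σ ^ (-m)) x := by rw [hfix m]
    apply hx
    calc σ x = σ ((σ ^ (-m)) x) := by rw [← h1]
      _ = (σ ^ (-m)) x := hc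
      _ = x := h1.symm
  refine ⟨h * σ ^ (-m), ?_, ?_, ?_⟩
  · rw [map_mul, hsign, map_zpow, hσsign, one_zpow, one_mul]
  · intro a' ha'
    have hσa : σ a' ≠ a' := (hσsupp a').mpr ha'
    have hy : σ ((σ ^ (-m)) a') ≠ (σ ^ (-m)) a' := hKpres a' hσa
    rw [Equiv.Perm.mul_apply, hKmap _ hy, hcancel]
  · have hgeq : h * g₀ * h⁻¹ = g := by
      have hexp : h * (σ * g₀) * h⁻¹ = (h * σ * h⁻¹) * (h * g₀ * h⁻¹) := by group
      rw [hexp, hσeq] at hh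
      exact mul_left_cancel hh
    have hcg : Commute g₀ σ := ((disj_of_fix hσsupp g₀ hg₀).symm).commute
    have hzc : g₀ * σ ^ (-m) = σ ^ (-m) * g₀ := ((hcg.zpow_right (-m)).eq)
    have hinv : (h * σ ^ (-m))⁻¹ = σ ^ m * h⁻¹ := by
      rw [mul_inv_rev, ← zpow_neg, neg_neg]
    rw [hinv, ← hgeq]
    calc h * σ ^ (-m) * g₀ * (σ ^ m * h⁻¹)
        = h * (σ ^ (-m) * g₀ * σ ^ m) * h⁻¹ := by group
      _ = h * (g₀ * (σ ^ (-m) * σ ^ m)) * h⁻¹ := by rw [← hzc]; group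
      _ = h * g₀ * h⁻¹ := by rw [← zpow_add, neg_add_cancel, zpow_zero, mul_one, mul_assoc]

end Perm

lemma sqrtC_mul_self {z : ℂ} (hz : z ≠ 0) : sqrtC z * sqrtC z = z := by
  rw [sqrtC, ← Complex.cpow_add _ _ hz]
  norm_num


/-- Let `lam` be a self-conjugate partition of `n`, `q` odd,
`σ ∈ S_n` a `q`-cycle with support `{n-q+1, …, n}`, and suppose `q` is a diagonal hook
length of `lam`, with `mu` the unique self-conjugate partition in `M_q(lam)`.
If `ρ_lam^±` denote the two irreducible constituents of `χ_lam` restricted to `A_n`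
(with the standard values `x_lam ± y_lam` on the two split classes of cycle type `a(lam)`,
and agreeing elsewhere on `A_n`), and similarly `ρ_mu^±` for `A_{n-q}`, then for all
`g ∈ A_{n-q}` such that `σ g` has cycle type `a(lam)`,
`(ρ_lam^+ - ρ_lam^-)(σ g) = ± √((-1)^{(q-1)/2}·q) · (ρ_mu^+ - ρ_mu^-)(g)`,
with the sign `ε` determined by the chosen labelling. -/
theorem stmt_9 (n q : ℕ) (hq : Odd q) (hqn : q ≤ n)
    (lam : ℕ → ℕ) (hlam : IsPartitionFun lam) (hsc : conjFun lam = lam)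
    (hn : ∀ N, (∀ i, N ≤ i → lam i = 0) → ∑ i ∈ Finset.range N, lam i = n)
    (hqdiag : q ∈ diagHooks lam)
    (mu : ℕ → ℕ) (hmu : mu ∈ MhookSet q lam) (hmusc : conjFun mu = mu)
    (σ : Equiv.Perm (Fin n)) (hσc : σ.IsCycle)
    (hσsupp : ∀ x : Fin n, σ x ≠ x ↔ n - q ≤ (x : ℕ))
    -- the two constituents of the restriction of `χ_lam` to `A_n`
    (ρlamP ρlamM : Equiv.Perm (Fin n) → ℂ)
    (hρlam_class : ∀ h x : Equiv.Perm (Fin n), Equiv.Perm.sign h = 1 →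
      ρlamP (h * x * h⁻¹) = ρlamP x ∧ ρlamM (h * x * h⁻¹) = ρlamM x)
    (hρlam_split : ∀ x : Equiv.Perm (Fin n), Equiv.Perm.sign x = 1 →
      x.cycleType = diagCycleType lam →
      (ρlamP x - ρlamM x = 2 * ySC n lam ∨ ρlamP x - ρlamM x = -(2 * ySC n lam)))
    (hρlam_opp : ∀ x x' : Equiv.Perm (Fin n), Equiv.Perm.sign x = 1 →
      Equiv.Perm.sign x' = 1 →
      x.cycleType = diagCycleType lam → x'.cycleType = diagCycleType lam →
      ¬ (∃ h : Equiv.Perm (Fin n), Equiv.Perm.sign h = 1 ∧ h * x * h⁻¹ = x') →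
      ρlamP x - ρlamM x = -(ρlamP x' - ρlamM x'))
    (hρlam_eq : ∀ x : Equiv.Perm (Fin n), Equiv.Perm.sign x = 1 →
      x.cycleType ≠ diagCycleType lam → ρlamP x = ρlamM x)
    -- the two constituents of the restriction of `χ_mu` to `A_{n-q}`, viewed as functions
    -- on the permutations of `Fin n` fixing the last `q` points
    (ρmuP ρmuM : Equiv.Perm (Fin n) → ℂ)
    (hρmu_class : ∀ h x : Equiv.Perm (Fin n), Equiv.Perm.sign h = 1 →
      (∀ a : Fin n, n - q ≤ (a : ℕ) → h a = a) → (∀ a : Fin n, n - q ≤ (a : ℕ) → x a = a) →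
      ρmuP (h * x * h⁻¹) = ρmuP x ∧ ρmuM (h * x * h⁻¹) = ρmuM x)
    (hρmu_split : ∀ x : Equiv.Perm (Fin n), Equiv.Perm.sign x = 1 →
      (∀ a : Fin n, n - q ≤ (a : ℕ) → x a = a) →
      x.cycleType = diagCycleType mu →
      (ρmuP x - ρmuM x = 2 * ySC (n - q) mu ∨ ρmuP x - ρmuM x = -(2 * ySC (n - q) mu)))
    (hρmu_opp : ∀ x x' : Equiv.Perm (Fin n), Equiv.Perm.sign x = 1 →
      Equiv.Perm.sign x' = 1 →
      (∀ a : Fin n, n - q ≤ (a : ℕ) → x a = a) → (∀ a : Fin n, n - q ≤ (a : ℕ) → x' a = a) →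
      x.cycleType = diagCycleType mu → x'.cycleType = diagCycleType mu →
      ¬ (∃ h : Equiv.Perm (Fin n), Equiv.Perm.sign h = 1 ∧
          (∀ a : Fin n, n - q ≤ (a : ℕ) → h a = a) ∧ h * x * h⁻¹ = x') →
      ρmuP x - ρmuM x = -(ρmuP x' - ρmuM x')) :
    ∃ ε : ℂ, (ε = 1 ∨ ε = -1) ∧
      ∀ g : Equiv.Perm (Fin n),
        (∀ a : Fin n, n - q ≤ (a : ℕ) → g a = a) → Equiv.Perm.sign g = 1 →
        (σ * g).cycleType = diagCycleType lam →
        ρlamP (σ * g) - ρlamM (σ * g) =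
          ε * sqrtC ((-1 : ℂ) ^ ((q - 1) / 2) * (q : ℂ)) * (ρmuP g - ρmuM g) := by
    classical
  obtain ⟨hdec, N0, hvan⟩ := hlam
  have hq1 : 1 ≤ q := by rcases hq with ⟨k, hk⟩; omega
  have hcard1 : σ.support.card = q := supp_card hσsupp hqn hq1
  have hq2 : 2 ≤ q := by
    have := hσc.two_le_card_support
    omega
  have hσsign : Equiv.Perm.sign σ = 1 := by
    rw [hσc.sign, hcard1, Odd.neg_one_pow hq, neg_neg]
  obtain ⟨i0, j0, hij, hqhook, hmu_eq⟩ := hmu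
  subst hmu_eq
  have hteq : i0 = j0 := remove_diag hdec N0 hvan hsc i0 j0 hij hmusc
  subst hteq
  have hmem := durfee_mem_iff hdec N0 hvan
  have htd : i0 < durfee lam := ht_d hdec N0 hvan hsc i0 hij
  have hdm : durfee (removeHook lam i0 i0) = durfee lam - 1 :=
    durfee_mu hdec N0 hvan hsc i0 hij
  have hinj : ∀ s ∈ Finset.range (durfee lam), ∀ s' ∈ Finset.range (durfee lam),
      hookLength lam s s = hookLength lam s' s' → s = s' := by
    intro s hs s' hs' hss
    simp only [Finset.mem_range] at hs hs'
    rcases lt_trichotomy s s' with h | h | h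
    · have := hook_strict_anti hdec N0 hvan hsc s s' h hs'; omega
    · exact h
    · have := hook_strict_anti hdec N0 hvan hsc s' s h hs; omega
  have hdh_mu : diagHooks (removeHook lam i0 i0) =
      ((Finset.range (durfee lam)).erase i0).image (fun s => hookLength lam s s) :=
    diagHooks_mu hdec N0 hvan hsc i0 hij hmusc
  have hdh_lam : diagHooks lam =
      (Finset.range (durfee lam)).image (fun s => hookLength lam s s) := rfl
  have hinj' : ∀ s ∈ (Finset.range (durfee lam)).erase i0,
      ∀ s' ∈ (Finset.range (durfee lam)).erase i0,
      hookLength lam s s = hookLength lam s' s' → s = s' := fun s hs s' hs' =>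
    hinj s (Finset.mem_of_mem_erase hs) s' (Finset.mem_of_mem_erase hs')
  have hcard_lam : (diagHooks lam).card = durfee lam := by
    rw [hdh_lam, Finset.card_image_of_injOn
      (fun s hs s' hs' h => hinj s (Finset.mem_coe.mp hs) s' (Finset.mem_coe.mp hs') h),
      Finset.card_range]
  have hcard_mu : (diagHooks (removeHook lam i0 i0)).card = durfee lam - 1 := by
    rw [hdh_mu, Finset.card_image_of_injOn
      (fun s hs s' hs' h => hinj' s (Finset.mem_coe.mp hs) s' (Finset.mem_coe.mp hs') h),
      Finset.card_erase_of_mem (Finset.mem_range.mpr htd), Finset.card_range]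
  have hq_eq : hookLength lam i0 i0 = q := hqhook
  have hq_notin : q ∉ diagHooks (removeHook lam i0 i0) := by
    rw [hdh_mu]
    intro hcmem
    obtain ⟨s, hs, hsq⟩ := Finset.mem_image.mp hcmem
    have : s = i0 := hinj s (Finset.mem_of_mem_erase hs) i0 (Finset.mem_range.mpr htd)
      (by rw [hsq, hq_eq])
    exact (Finset.ne_of_mem_erase hs) this
  have hinsert : diagHooks lam = insert q (diagHooks (removeHook lam i0 i0)) := by
    rw [hdh_lam, hdh_mu]
    conv_lhs => rw [← Finset.insert_erase (Finset.mem_range.mpr htd)]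
    rw [Finset.image_insert, hq_eq]
  have hctype : diagCycleType lam = q ::ₘ diagCycleType (removeHook lam i0 i0) := by
    rw [diagCycleType, diagCycleType, hinsert, Finset.insert_val,
      Multiset.ndinsert_of_notMem hq_notin,
      Multiset.filter_cons_of_pos _ (by simpa using hq2)]
  have hsum : n = ∑ s ∈ Finset.range (durfee lam), hookLength lam s s :=
    sum_diag_hooks hdec N0 hvan hsc n
      (hn _ (fun i hi => hvan i (le_trans (le_max_left _ _) hi)))
  have hookL : ∀ s, hookLength lam s s = (lam s - s) + (lam s - s) - 1 := by
    intro s; rw [hookLength, congrFun hsc s]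
  have hTn : n + durfee lam = 2 * ∑ s ∈ Finset.range (durfee lam), (lam s - s) := by
    have he : ∀ s ∈ Finset.range (durfee lam),
        hookLength lam s s + 1 = 2 * (lam s - s) := by
      intro s hs
      simp only [Finset.mem_range] at hs
      have h1 : s < lam s := (hmem s).mpr hs
      rw [hookL s]; omega
    have h2 := Finset.sum_congr rfl he
    rw [Finset.sum_add_distrib, Finset.sum_const, Finset.card_range, smul_eq_mul,
      mul_one, ← Finset.mul_sum] at h2
    omega
  have hRn : (∑ s ∈ (Finset.range (durfee lam)).erase i0, hookLength lam s s)
      + (durfee lam - 1)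
      = 2 * ∑ s ∈ (Finset.range (durfee lam)).erase i0, (lam s - s) := by
    have he : ∀ s ∈ (Finset.range (durfee lam)).erase i0,
        hookLength lam s s + 1 = 2 * (lam s - s) := by
      intro s hs
      have hs' := Finset.mem_range.mp (Finset.mem_of_mem_erase hs)
      have h1 : s < lam s := (hmem s).mpr hs'
      rw [hookL s]; omega
    have h2 := Finset.sum_congr rfl he
    rw [Finset.sum_add_distrib, Finset.sum_const,
      Finset.card_erase_of_mem (Finset.mem_range.mpr htd), Finset.card_range,
      smul_eq_mul, mul_one, ← Finset.mul_sum] at h2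
    omega
  have hTsplit : ∑ s ∈ Finset.range (durfee lam), (lam s - s)
      = (lam i0 - i0) + ∑ s ∈ (Finset.range (durfee lam)).erase i0, (lam s - s) :=
    (Finset.add_sum_erase _ _ (Finset.mem_range.mpr htd)).symm
  have hqsplit : n = q + ∑ s ∈ (Finset.range (durfee lam)).erase i0, hookLength lam s s := by
    rw [hsum, ← Finset.add_sum_erase _ _ (Finset.mem_range.mpr htd), hq_eq]
  have hU1 : durfee lam - 1 ≤ ∑ s ∈ (Finset.range (durfee lam)).erase i0, (lam s - s) := by
    have h1 := Finset.card_nsmul_le_sum ((Finset.range (durfee lam)).erase i0)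
      (fun s => lam s - s) 1 (fun s hs => by
        have hs' := Finset.mem_range.mp (Finset.mem_of_mem_erase hs)
        have h1 : s < lam s := (hmem s).mpr hs'
        show 1 ≤ lam s - s
        omega)
    rwa [Finset.card_erase_of_mem (Finset.mem_range.mpr htd), Finset.card_range,
      smul_eq_mul, mul_one] at h1
  have hqp : q + 1 = 2 * (lam i0 - i0) := by
    rw [← hq_eq, hookL]; omega
  have hp1 : 1 ≤ lam i0 - i0 := by omega
  have hexp : (n - durfee lam) / 2
      = (q - 1) / 2 + ((n - q) - (durfee lam - 1)) / 2 := by omega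
  have hprod : (∏ h ∈ diagHooks lam, (h : ℂ))
      = (q : ℂ) * ∏ h ∈ diagHooks (removeHook lam i0 i0), (h : ℂ) := by
    rw [hdh_lam, hdh_mu, Finset.prod_image hinj, Finset.prod_image hinj',
      ← Finset.mul_prod_erase _ _ (Finset.mem_range.mpr htd), hq_eq]
  have hmu_pos : ∀ h ∈ diagHooks (removeHook lam i0 i0), h ≠ 0 := by
    intro h hh
    rw [hdh_mu] at hh
    obtain ⟨s, hs, rfl⟩ := Finset.mem_image.mp hh
    have hs' := Finset.mem_range.mp (Finset.mem_of_mem_erase hs)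
    have h1 : s < lam s := (hmem s).mpr hs'
    rw [hookL s]; omega
  set B := ((-1 : ℂ) ^ ((q - 1) / 2) * (q : ℂ)) with hB_def
  set A := ((-1 : ℂ) ^ ((n - (diagHooks lam).card) / 2) * ∏ h ∈ diagHooks lam, (h : ℂ))
    with hA_def
  set C := ((-1 : ℂ) ^ ((n - q - (diagHooks (removeHook lam i0 i0)).card) / 2) *
    ∏ h ∈ diagHooks (removeHook lam i0 i0), (h : ℂ)) with hC_def
  have hCne : C ≠ 0 := by
    rw [hC_def]
    apply mul_ne_zero (pow_ne_zero _ (by norm_num))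
    rw [Finset.prod_ne_zero_iff]
    intro h hh
    exact Nat.cast_ne_zero.mpr (hmu_pos h hh)
  have hBne : B ≠ 0 := by
    rw [hB_def]
    exact mul_ne_zero (pow_ne_zero _ (by norm_num)) (Nat.cast_ne_zero.mpr (by omega))
  have hA_eq : A = B * C := by
    rw [hA_def, hB_def, hC_def, hcard_lam, hcard_mu, hprod, hexp, pow_add]
    ring
  have hAne : A ≠ 0 := by rw [hA_eq]; exact mul_ne_zero hBne hCne
  have h2Ylam : 2 * ySC n lam = sqrtC A := by rw [ySC, hA_def]; ring
  have h2Ymu : 2 * ySC (n - q) (removeHook lam i0 i0) = sqrtC C := by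
    rw [ySC, hC_def]; ring
  have hkey : sqrtC A = sqrtC B * sqrtC C ∨ sqrtC A = -(sqrtC B * sqrtC C) := by
    apply mul_self_eq_mul_self_iff.mp
    rw [sqrtC_mul_self hAne, hA_eq]
    have hb := sqrtC_mul_self hBne
    have hc := sqrtC_mul_self hCne
    have hr : (sqrtC B * sqrtC C) * (sqrtC B * sqrtC C)
        = (sqrtC B * sqrtC B) * (sqrtC C * sqrtC C) := by ring
    rw [hr, hb, hc]
  have hcountCT : Multiset.count q (diagCycleType lam) = 1 := by
    rw [diagCycleType]
    exact Multiset.count_eq_one_of_mem ((diagHooks lam).nodup.filter _)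
      (Multiset.mem_filter.mpr ⟨hqdiag, by simpa using hq2⟩)
  have hgtype : ∀ g : Equiv.Perm (Fin n), (∀ a : Fin n, n - q ≤ (a : ℕ) → g a = a) →
      (σ * g).cycleType = diagCycleType lam →
      g.cycleType = diagCycleType (removeHook lam i0 i0) := by
    intro g hgf hgt
    have hdisj := disj_of_fix hσsupp g hgf
    have h1 : (σ * g).cycleType = {q} + g.cycleType := by
      rw [Equiv.Perm.Disjoint.cycleType_mul hdisj, hσc.cycleType, hcard1]
    rw [h1, Multiset.singleton_add, hctype] at hgt
    exact (Multiset.cons_inj_right q).mp hgt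
  have hsignp : ∀ g : Equiv.Perm (Fin n), Equiv.Perm.sign g = 1 →
      Equiv.Perm.sign (σ * g) = 1 := by
    intro g hgs; rw [map_mul, hσsign, hgs, one_mul]
  by_cases hex : ∃ g0 : Equiv.Perm (Fin n), (∀ a : Fin n, n - q ≤ (a : ℕ) → g0 a = a) ∧
      Equiv.Perm.sign g0 = 1 ∧ (σ * g0).cycleType = diagCycleType lam
  · obtain ⟨g0, hg0f, hg0s, hg0t⟩ := hex
    have hF0 := hρlam_split (σ * g0) (hsignp g0 hg0s) hg0t
    have hG0 := hρmu_split g0 hg0s hg0f (hgtype g0 hg0f hg0t)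
    rw [h2Ylam] at hF0
    rw [h2Ymu] at hG0
    obtain ⟨ε, hεpm, hFG0⟩ : ∃ ε : ℂ, (ε = 1 ∨ ε = -1) ∧
        ρlamP (σ * g0) - ρlamM (σ * g0) = ε * sqrtC B * (ρmuP g0 - ρmuM g0) := by
      rcases hF0 with hF | hF <;> rcases hG0 with hG | hG <;> rcases hkey with hk | hk
      · exact ⟨1, Or.inl rfl, by rw [hF, hk, hG]; ring⟩
      · exact ⟨-1, Or.inr rfl, by rw [hF, hk, hG]; ring⟩
      · exact ⟨-1, Or.inr rfl, by rw [hF, hk, hG]; ring⟩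
      · exact ⟨1, Or.inl rfl, by rw [hF, hk, hG]; ring⟩
      · exact ⟨-1, Or.inr rfl, by rw [hF, hk, hG]; ring⟩
      · exact ⟨1, Or.inl rfl, by rw [hF, hk, hG]; ring⟩
      · exact ⟨1, Or.inl rfl, by rw [hF, hk, hG]; ring⟩
      · exact ⟨-1, Or.inr rfl, by rw [hF, hk, hG]; ring⟩
    refine ⟨ε, hεpm, ?_⟩
    intro g hgf hgs hgt
    by_cases hcj : ∃ h : Equiv.Perm (Fin n), Equiv.Perm.sign h = 1 ∧
        h * (σ * g0) * h⁻¹ = σ * g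
    · obtain ⟨h, hhs, hhc⟩ := hcj
      have hcnt : Multiset.count q ((σ * g).cycleType) = 1 := by rw [hgt]; exact hcountCT
      obtain ⟨h1, h1s, h1f, h1c⟩ :=
        conj_transfer hσc hσsupp hqn hq1 g0 g h hσsign hg0f hgf hhc hhs hcnt
      have hclass := hρlam_class h (σ * g0) hhs
      have hmucl := hρmu_class h1 g0 h1s h1f hg0f
      rw [← hhc, hclass.1, hclass.2, ← h1c, hmucl.1, hmucl.2]
      exact hFG0
    · have hncj2 : ¬ (∃ h : Equiv.Perm (Fin n), Equiv.Perm.sign h = 1 ∧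
          h * (σ * g) * h⁻¹ = σ * g0) := by
        rintro ⟨h, hhs, hhc⟩
        refine hcj ⟨h⁻¹, by rw [map_inv, hhs, inv_one], ?_⟩
        rw [← hhc]; group
      have hD := hρlam_opp (σ * g) (σ * g0) (hsignp g hgs) (hsignp g0 hg0s) hgt hg0t hncj2
      have hncjmu : ¬ (∃ h : Equiv.Perm (Fin n), Equiv.Perm.sign h = 1 ∧
          (∀ a : Fin n, n - q ≤ (a : ℕ) → h a = a) ∧ h * g * h⁻¹ = g0) := by
        rintro ⟨h, hhs, hhf, hhc⟩
        exact hncj2 ⟨h, hhs, conj_lift hσsupp g g0 h hhf hhc⟩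
      have hE := hρmu_opp g g0 hgs hg0s hgf hg0f (hgtype g hgf hgt)
        (hgtype g0 hg0f hg0t) hncjmu
      rw [hD, hE, hFG0]
      ring
  · refine ⟨1, Or.inl rfl, fun g hgf hgs hgt => absurd ⟨g, hgf, hgs, hgt⟩ hex⟩
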